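/- (Proposition 3, Part 2: fast time-scale state feasibility.) Let Ξ be convex, let the fast time-scale disturbance process satisfy quasi-stationarity, and let b ∈ ℝ^n. Suppose the affine policy is feasible for the slow time-scale state constraints: for every ξ = (1, ξ(0), …, ξ(T−1)) ∈ Ξ and every t = 0,…,T, 0 ≤ x(t;ξ) ≤ b componentwise. Then the fast time-scale states satisfy 0 ≤ x(k,t) ≤ b componentwise for every t = 0,…,T−1 and every k = 0,…,K. -/

import Mathlib

/-- Slow time-scale average `ξ̄(t) = (1/K)·Σ_{ℓ=0}^{K−1} ξ(ℓ,t)` of a fast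
time-scale disturbance process `ξ(k,t)`. -/
noncomputable def slowAvg {ι : Type*} (K : ℕ) (ξ : ℕ → ℕ → ι → ℝ) (t : ℕ) :
    ι → ℝ :=
  (K : ℝ)⁻¹ • ∑ ℓ ∈ Finset.range K, ξ ℓ t

/-- Slow time-scale affine input `u(t;ξ) = ū(t) + Σ_{s=0}^{t} Q(t,s) ξ(s)`.
Inputs live in `ℝ^{2n} ≃ (Fin n × Fin 2 → ℝ)` and disturbance blocks in
`ℝ^{3n} ≃ (Fin n × Fin 3 → ℝ)`. -/
def uslow {n : ℕ} (ubar : ℕ → Fin n × Fin 2 → ℝ)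
    (Q : ℕ → ℕ → Matrix (Fin n × Fin 2) (Fin n × Fin 3) ℝ)
    (ζ : ℕ → Fin n × Fin 3 → ℝ) (t : ℕ) : Fin n × Fin 2 → ℝ :=
  ubar t + ∑ s ∈ Finset.range (t + 1), (Q t s).mulVec (ζ s)

/-- Fast time-scale input
`u(k,t) = ū(t) + Q(t,t) ξ(k,t) + Σ_{s=0}^{t−1} Q(t,s) ξ̄(s)`. -/
noncomputable def ufast {n : ℕ} (K : ℕ) (ubar : ℕ → Fin n × Fin 2 → ℝ)
    (Q : ℕ → ℕ → Matrix (Fin n × Fin 2) (Fin n × Fin 3) ℝ)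
    (ξ : ℕ → ℕ → Fin n × Fin 3 → ℝ) (k t : ℕ) : Fin n × Fin 2 → ℝ :=
  ubar t + (Q t t).mulVec (ξ k t)
    + ∑ s ∈ Finset.range t, (Q t s).mulVec (slowAvg K ξ s)

/-- Slow time-scale state `x(t;ξ) = x(0) + B·Σ_{s=0}^{t−1} u(s;ξ)`. -/
def xslow {n : ℕ} (B : Matrix (Fin n) (Fin n × Fin 2) ℝ) (x0 : Fin n → ℝ)
    (ubar : ℕ → Fin n × Fin 2 → ℝ)
    (Q : ℕ → ℕ → Matrix (Fin n × Fin 2) (Fin n × Fin 3) ℝ)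
    (ζ : ℕ → Fin n × Fin 3 → ℝ) (t : ℕ) : Fin n → ℝ :=
  x0 + B.mulVec (∑ s ∈ Finset.range t, uslow ubar Q ζ s)

/-- Proposition 3, Part 2: fast time-scale state feasibility:
if the affine policy robustly satisfies `0 ≤ x(t;ξ) ≤ b` for all slow
time-scale trajectories in `Ξ` and `t = 0,…,T`, then the fast time-scale
states satisfy `0 ≤ x(k,t) ≤ b` for all `t = 0,…,T−1` and `k = 0,…,K`. -/
theorem statement_5 (n T K : ℕ) (hn : 0 < n) (hT : 0 < T) (hK : 0 < K)
    (Ξ : Set (ℝ × (Fin T → Fin n × Fin 3 → ℝ))) (hconv : Convex ℝ Ξ)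
    (ξ : ℕ → ℕ → Fin n × Fin 3 → ℝ)
    (hquasi : ∀ f : ℕ → ℕ, (∀ t, f t < K) →
      ((1 : ℝ), fun t : Fin T => ξ (f t) t) ∈ Ξ)
    (ubar : ℕ → Fin n × Fin 2 → ℝ)
    (Q : ℕ → ℕ → Matrix (Fin n × Fin 2) (Fin n × Fin 3) ℝ)
    (B : Matrix (Fin n) (Fin n × Fin 2) ℝ) (x0 : Fin n → ℝ) (b : Fin n → ℝ)
    (xf : ℕ → ℕ → Fin n → ℝ)
    (hx00 : xf 0 0 = x0)
    (hstep : ∀ t < T, ∀ k < K,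
      xf (k + 1) t = xf k t + (K : ℝ)⁻¹ • B.mulVec (ufast K ubar Q ξ k t))
    (hbdry : ∀ t, t + 1 < T → xf 0 (t + 1) = xf K t)
    (hslow : ∀ ζ : ℕ → Fin n × Fin 3 → ℝ,
      ((1 : ℝ), fun s : Fin T => ζ s) ∈ Ξ → ∀ t ≤ T, ∀ i,
        0 ≤ xslow B x0 ubar Q ζ t i ∧ xslow B x0 ubar Q ζ t i ≤ b i) :
    ∀ t < T, ∀ k ≤ K, ∀ i, 0 ≤ xf k t i ∧ xf k t i ≤ b i := by
  have hK0 : (K : ℝ) ≠ 0 := Nat.cast_ne_zero.mpr hK.ne'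
  -- the modified slow-scale trajectories
  set ζbar : ℕ → Fin n × Fin 3 → ℝ := slowAvg K ξ with hζbar
  set ζ : ℕ → ℕ → ℕ → Fin n × Fin 3 → ℝ :=
    fun t ℓ s => if s < t then slowAvg K ξ s else ξ ℓ s with hζdef
  -- convex mixing lemma
  have hmix : ∀ g : ℕ → ℕ → ℕ, (∀ m < K, ∀ s, g m s < K) →
      ((1 : ℝ), fun s : Fin T =>
        (K : ℝ)⁻¹ • ∑ m ∈ Finset.range K, ξ (g m s) s) ∈ Ξ := by
    intro g hg
    have hmem := hconv.sum_mem (t := Finset.range K)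
      (w := fun _ => (K : ℝ)⁻¹)
      (z := fun m => ((1 : ℝ), fun s : Fin T => ξ (g m s) s))
      (fun i _ => by positivity)
      (by simp [Finset.sum_const, nsmul_eq_mul, mul_inv_cancel₀ hK0])
      (fun m hm => hquasi (fun s => g m s) (fun s => hg m (Finset.mem_range.mp hm) s))
    convert hmem using 1
    refine Prod.ext ?_ ?_
    · simp [Prod.fst_sum, Finset.sum_const, nsmul_eq_mul, mul_inv_cancel₀ hK0]
    · funext s
      simp [Prod.snd_sum, Finset.sum_apply, Finset.smul_sum]
  have hmemζ : ∀ t ℓ, ℓ < K → ((1 : ℝ), fun s : Fin T => ζ t ℓ s) ∈ Ξ := by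
    intro t ℓ hℓ
    have h := hmix (fun m s => if s < t then m else ℓ)
      (fun m hm s => by show (if s < t then m else ℓ) < K; split <;> [exact hm; exact hℓ])
    convert h using 2
    funext s
    by_cases hs : (s : ℕ) < t
    · simp [hζdef, hs, slowAvg]
    · simp only [hζdef, hs, if_false]
      rw [Finset.sum_const, Finset.card_range, ← Nat.cast_smul_eq_nsmul ℝ,
        smul_smul, inv_mul_cancel₀ hK0, one_smul]
  have hmembar : ((1 : ℝ), fun s : Fin T => ζbar s) ∈ Ξ := by
    exact hmix (fun m _ => m) (fun m hm _ => hm)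
  -- basic facts about the modified trajectories
  have huc : ∀ t ℓ s, s < t → uslow ubar Q (ζ t ℓ) s = uslow ubar Q ζbar s := by
    intro t ℓ s hs
    unfold uslow
    congr 1
    refine Finset.sum_congr rfl fun r hr => ?_
    have hrt : r < t := lt_of_le_of_lt (Nat.lt_succ_iff.mp (Finset.mem_range.mp hr)) hs
    simp [hζdef, hζbar, hrt]
  have hufast : ∀ t ℓ, uslow ubar Q (ζ t ℓ) t = ufast K ubar Q ξ ℓ t := by
    intro t ℓ
    unfold uslow ufast
    rw [Finset.sum_range_succ]
    have h1 : ζ t ℓ t = ξ ℓ t := by simp [hζdef]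
    rw [h1, Finset.sum_congr rfl (fun s hs => by
      rw [show ζ t ℓ s = slowAvg K ξ s from by simp [hζdef, Finset.mem_range.mp hs]])]
    abel
  have hA : ∀ t ℓ, xslow B x0 ubar Q (ζ t ℓ) (t+1)
      = xslow B x0 ubar Q ζbar t + B.mulVec (ufast K ubar Q ξ ℓ t) := by
    intro t ℓ
    unfold xslow
    rw [Finset.sum_range_succ,
      Finset.sum_congr rfl (fun s hs => huc t ℓ s (Finset.mem_range.mp hs)),
      hufast, Matrix.mulVec_add]
    abel
  have hXstep : ∀ t, xslow B x0 ubar Q ζbar (t+1)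
      = xslow B x0 ubar Q ζbar t + B.mulVec (uslow ubar Q ζbar t) := by
    intro t
    unfold xslow
    rw [Finset.sum_range_succ, Matrix.mulVec_add]
    abel
  have hsumu : ∀ t, ∑ ℓ ∈ Finset.range K, ufast K ubar Q ξ ℓ t
      = (K : ℝ) • uslow ubar Q ζbar t := by
    intro t
    unfold ufast uslow
    rw [Finset.sum_range_succ]
    have hbar : ζbar t = (K : ℝ)⁻¹ • ∑ ℓ ∈ Finset.range K, ξ ℓ t := by
      simp [hζbar, slowAvg]
    have hsums : ∑ ℓ ∈ Finset.range K, (Q t t).mulVec (ξ ℓ t)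
        = (Q t t).mulVec (∑ ℓ ∈ Finset.range K, ξ ℓ t) := by
      rw [Matrix.mulVec_sum]
    rw [hbar, Matrix.mulVec_smul, Finset.sum_add_distrib, Finset.sum_add_distrib,
      Finset.sum_const, Finset.sum_const, Finset.card_range, hsums,
      ← Nat.cast_smul_eq_nsmul ℝ, ← Nat.cast_smul_eq_nsmul ℝ]
    have : (K : ℝ) • (K : ℝ)⁻¹ • (Q t t).mulVec (∑ ℓ ∈ Finset.range K, ξ ℓ t)
        = (Q t t).mulVec (∑ ℓ ∈ Finset.range K, ξ ℓ t) := by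
      rw [smul_smul, mul_inv_cancel₀ hK0, one_smul]
    rw [smul_add, smul_add, this]
    abel
  -- the convex-combination representation of fast states
  set E : ℕ → ℕ → Fin n → ℝ := fun t k =>
    (K : ℝ)⁻¹ • ((∑ ℓ ∈ Finset.range k, xslow B x0 ubar Q (ζ t ℓ) (t+1))
      + ((K : ℝ) - (k : ℝ)) • xslow B x0 ubar Q ζbar t) with hE
  have hE0 : ∀ t, E t 0 = xslow B x0 ubar Q ζbar t := by
    intro t
    simp only [hE, Finset.range_zero, Finset.sum_empty, Nat.cast_zero, sub_zero,
      zero_add, smul_smul, inv_mul_cancel₀ hK0, one_smul]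
  have kstep : ∀ t < T, ∀ k < K, xf k t = E t k → xf (k+1) t = E t (k+1) := by
    intro t ht k hk hIH
    rw [hstep t ht k hk, hIH]
    simp only [hE]
    rw [Finset.sum_range_succ, hA t k]
    push_cast
    module
  have key : ∀ t < T, ∀ k ≤ K, xf k t = E t k := by
    intro t
    induction t with
    | zero =>
      intro ht k
      induction k with
      | zero =>
        intro _
        rw [hx00, hE0]
        unfold xslow
        simp [Matrix.mulVec_zero]
      | succ k ih =>
        intro hk
        exact kstep 0 ht k (by omega) (ih (by omega))
    | succ t iht =>
      intro ht k
      induction k with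
      | zero =>
        intro _
        rw [hbdry t ht, iht (by omega) K le_rfl, hE0]
        simp only [hE]
        rw [Finset.sum_congr rfl (fun ℓ _ => hA t ℓ), Finset.sum_add_distrib,
          Finset.sum_const, Finset.card_range,
          show ∑ ℓ ∈ Finset.range K, B.mulVec (ufast K ubar Q ξ ℓ t)
            = B.mulVec ((K:ℝ) • uslow ubar Q ζbar t) from by
              rw [← hsumu t]; rw [Matrix.mulVec_sum],
          Matrix.mulVec_smul, hXstep, ← Nat.cast_smul_eq_nsmul ℝ]
        push_cast
        match_scalars <;> field_simp <;> ring
      | succ k ih =>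
        intro hk
        exact kstep (t+1) ht k (by omega) (ih (by omega))
  -- conclude the bounds
  intro t ht k hk i
  have hbar := hslow ζbar hmembar t (by omega)
  have hℓb : ∀ ℓ < K, ∀ i, 0 ≤ xslow B x0 ubar Q (ζ t ℓ) (t+1) i ∧
      xslow B x0 ubar Q (ζ t ℓ) (t+1) i ≤ b i :=
    fun ℓ hl => hslow (ζ t ℓ) (hmemζ t ℓ hl) (t+1) (by omega)
  rw [key t ht k hk]
  have hexp : E t k i = (K:ℝ)⁻¹ *
      ((∑ ℓ ∈ Finset.range k, xslow B x0 ubar Q (ζ t ℓ) (t+1) i)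
        + ((K:ℝ) - (k:ℝ)) * xslow B x0 ubar Q ζbar t i) := by
    simp only [hE, Pi.smul_apply, Pi.add_apply, Finset.sum_apply, smul_eq_mul]
  rw [hexp]
  have hKk : (0:ℝ) ≤ (K:ℝ) - (k:ℝ) := by
    have : (k:ℝ) ≤ (K:ℝ) := Nat.cast_le.mpr hk
    linarith
  constructor
  · apply mul_nonneg (by positivity)
    apply add_nonneg
    · exact Finset.sum_nonneg fun ℓ hl =>
        (hℓb ℓ (by have := Finset.mem_range.mp hl; omega) i).1
    · exact mul_nonneg hKk (hbar i).1
  · have h1 : (∑ ℓ ∈ Finset.range k, xslow B x0 ubar Q (ζ t ℓ) (t+1) i)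
        ≤ (k:ℝ) * b i := by
      calc (∑ ℓ ∈ Finset.range k, xslow B x0 ubar Q (ζ t ℓ) (t+1) i)
          ≤ ∑ _ℓ ∈ Finset.range k, b i := Finset.sum_le_sum fun ℓ hl =>
            (hℓb ℓ (by have := Finset.mem_range.mp hl; omega) i).2
        _ = (k:ℝ) * b i := by simp [mul_comm]
    have h2 : ((K:ℝ) - (k:ℝ)) * xslow B x0 ubar Q ζbar t i
        ≤ ((K:ℝ) - (k:ℝ)) * b i := mul_le_mul_of_nonneg_left (hbar i).2 hKk
    calc (K:ℝ)⁻¹ * ((∑ ℓ ∈ Finset.range k, xslow B x0 ubar Q (ζ t ℓ) (t+1) i)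
          + ((K:ℝ) - (k:ℝ)) * xslow B x0 ubar Q ζbar t i)
        ≤ (K:ℝ)⁻¹ * ((k:ℝ) * b i + ((K:ℝ) - (k:ℝ)) * b i) :=
          mul_le_mul_of_nonneg_left (add_le_add h1 h2) (by positivity)
      _ = b i := by field_simp; ring
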